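/- arXiv:1110.0639 — 4 statements merged into one kernel-verified Lean document; each statement's English description precedes it below -/
import Mathlib

section
/- Define, for n×n real symmetric positive definite matrices g and h (with n ≥ 1), the distortion K²(g,h) = ((1/n)·tr(g⁻¹h))^n / det(g⁻¹h). Then for any three symmetric positive definite matrices g, h, k one has K²(g,k) ≤ nⁿ · K²(g,h) · K²(h,k). -/
open Matrix

noncomputable def K2 {n : ℕ} (g h : Matrix (Fin n) (Fin n) ℝ) : ℝ :=
  ((1 / (n : ℝ)) * (g⁻¹ * h).trace) ^ n / (g⁻¹ * h).det

section aux

variable {m : Type*} [Fintype m] [DecidableEq m]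

private lemma psd_diag_nonneg {M : Matrix m m ℝ} (hM : M.PosSemidef) (i : m) :
    0 ≤ M i i := by
  exact hM.diag_nonneg

private lemma psd_trace_nonneg {M : Matrix m m ℝ} (hM : M.PosSemidef) :
    0 ≤ M.trace := by
  rw [Matrix.trace]
  exact Finset.sum_nonneg fun i _ => psd_diag_nonneg hM i

private lemma psd_diag_le_trace {M : Matrix m m ℝ} (hM : M.PosSemidef) (i : m) :
    M i i ≤ M.trace := by
  rw [Matrix.trace]
  exact Finset.single_le_sum (fun j _ => psd_diag_nonneg hM j) (Finset.mem_univ i)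

/-- For positive semidefinite real matrices, `tr (P*Q) ≤ tr P * tr Q`. -/
private lemma trace_mul_le_trace_mul_trace {P Q : Matrix m m ℝ}
    (hP : P.PosSemidef) (hQ : Q.PosSemidef) : (P * Q).trace ≤ P.trace * Q.trace := by
  obtain ⟨U, d, hU1, hU2, hdnn, hspec⟩ :
      ∃ (U : Matrix m m ℝ) (d : m → ℝ), U * star U = 1 ∧ star U * U = 1 ∧
        (∀ i, 0 ≤ d i) ∧ P = U * diagonal d * star U :=
    ⟨hP.1.eigenvectorUnitary, hP.1.eigenvalues,
      mem_unitaryGroup_iff.mp hP.1.eigenvectorUnitary.2,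
      mem_unitaryGroup_iff'.mp hP.1.eigenvectorUnitary.2,
      hP.eigenvalues_nonneg, by simpa using hP.1.spectral_theorem⟩
  set M : Matrix m m ℝ := star U * Q * U with hM
  have hMpsd : M.PosSemidef := hQ.conjTranspose_mul_mul_same U
  have hMtr : M.trace = Q.trace := by
    rw [hM, Matrix.trace_mul_cycle, hU1, Matrix.one_mul]
  have hkey : P * Q = U * (diagonal d * M) * star U := by
    have : U * (diagonal d * M) * star U
        = U * diagonal d * star U * Q * (U * star U) := by
      simp only [hM, Matrix.mul_assoc]
    rw [this, hU1, Matrix.mul_one, ← hspec]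
  have htrPQ : (P * Q).trace = ∑ i, d i * M i i := by
    rw [hkey, Matrix.trace_mul_cycle, hU2, Matrix.one_mul]
    simp [Matrix.trace, Matrix.diag, Matrix.diagonal_mul]
  have htrP : P.trace = ∑ i, d i := by
    rw [hspec, Matrix.trace_mul_cycle, hU2, Matrix.one_mul, Matrix.trace_diagonal]
  rw [htrPQ, htrP, Finset.sum_mul]
  refine Finset.sum_le_sum fun i _ => ?_
  have hdi : 0 ≤ d i := hdnn i
  have : M i i ≤ Q.trace := hMtr ▸ psd_diag_le_trace hMpsd i
  exact mul_le_mul_of_nonneg_left this hdi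

end aux

private lemma trace_inv_mul_nonneg {n : ℕ} {g k : Matrix (Fin n) (Fin n) ℝ}
    (hg : g.PosDef) (hk : k.PosDef) : 0 ≤ (g⁻¹ * k).trace := by
  obtain ⟨S, hSpsd, hSS⟩ : ∃ S : Matrix (Fin n) (Fin n) ℝ, S.PosSemidef ∧ S * S = g⁻¹ :=
    open scoped MatrixOrder in ⟨_, (CFC.sqrt_nonneg g⁻¹).posSemidef, CFC.sqrt_mul_sqrt_self g⁻¹ hg.inv.posSemidef.nonneg⟩
  have hconj : (S * k * S).PosSemidef := by
    have := hk.posSemidef.mul_mul_conjTranspose_same S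
    rwa [hSpsd.1] at this
  have : (g⁻¹ * k).trace = (S * k * S).trace := by
    rw [Matrix.trace_mul_cycle, hSS]
  rw [this]
  exact psd_trace_nonneg hconj

/-- The key trace inequality: `tr(g⁻¹k) ≤ tr(g⁻¹h) * tr(h⁻¹k)`. -/
private lemma trace_chain {n : ℕ} {g h k : Matrix (Fin n) (Fin n) ℝ}
    (hg : g.PosDef) (hh : h.PosDef) (hk : k.PosDef) :
    (g⁻¹ * k).trace ≤ (g⁻¹ * h).trace * (h⁻¹ * k).trace := by
  obtain ⟨S, hSpsd, hSS⟩ : ∃ S : Matrix (Fin n) (Fin n) ℝ, S.PosSemidef ∧ S * S = h :=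
    open scoped MatrixOrder in ⟨_, (CFC.sqrt_nonneg h).posSemidef, CFC.sqrt_mul_sqrt_self h hh.posSemidef.nonneg⟩
  have hdS : S.det * S.det = h.det := by rw [← Matrix.det_mul, hSS]
  have hdet : S.det ≠ 0 := by
    intro h0
    rw [h0, zero_mul] at hdS
    exact hh.det_pos.ne' hdS.symm
  have hunit : IsUnit S.det := isUnit_iff_ne_zero.mpr hdet
  have hSinv : S * S⁻¹ = 1 := Matrix.mul_nonsing_inv _ hunit
  have hSinv' : S⁻¹ * S = 1 := Matrix.nonsing_inv_mul _ hunit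
  have hinvh : S⁻¹ * S⁻¹ = h⁻¹ := by rw [← Matrix.mul_inv_rev, hSS]
  have hSipsd : (S⁻¹).PosSemidef := hSpsd.inv
  set P := S * g⁻¹ * S with hPdef
  set Q := S⁻¹ * k * S⁻¹ with hQdef
  have hP : P.PosSemidef := by
    have := hg.inv.posSemidef.mul_mul_conjTranspose_same S
    rwa [hSpsd.1] at this
  have hQ : Q.PosSemidef := by
    have := hk.posSemidef.mul_mul_conjTranspose_same S⁻¹
    rwa [hSipsd.1] at this
  have hPQ : P * Q = S * (g⁻¹ * k) * S⁻¹ := by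
    have : P * Q = S * g⁻¹ * (S * S⁻¹) * k * S⁻¹ := by
      simp only [hPdef, hQdef, Matrix.mul_assoc]
    rw [this, hSinv, Matrix.mul_one, Matrix.mul_assoc S g⁻¹ k]
  have htrPQ : (P * Q).trace = (g⁻¹ * k).trace := by
    rw [hPQ, Matrix.trace_mul_cycle, hSinv', Matrix.one_mul]
  have htrP : P.trace = (g⁻¹ * h).trace := by
    rw [hPdef, Matrix.trace_mul_cycle, hSS, Matrix.trace_mul_comm]
  have htrQ : Q.trace = (h⁻¹ * k).trace := by
    rw [hQdef, Matrix.trace_mul_cycle, hinvh]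
  calc (g⁻¹ * k).trace = (P * Q).trace := htrPQ.symm
    _ ≤ P.trace * Q.trace := trace_mul_le_trace_mul_trace hP hQ
    _ = (g⁻¹ * h).trace * (h⁻¹ * k).trace := by rw [htrP, htrQ]

theorem stmt_2 (n : ℕ) (hn : 1 ≤ n) (g h k : Matrix (Fin n) (Fin n) ℝ)
    (hg : g.PosDef) (hh : h.PosDef) (hk : k.PosDef) :
    K2 g k ≤ (n : ℝ) ^ n * K2 g h * K2 h k := by
  have hn0 : (n : ℝ) ≠ 0 := Nat.cast_ne_zero.mpr (by omega)
  set t := (g⁻¹ * k).trace with ht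
  set t1 := (g⁻¹ * h).trace with ht1
  set t2 := (h⁻¹ * k).trace with ht2
  have hgd : 0 < g.det := hg.det_pos
  have hhd : 0 < h.det := hh.det_pos
  have hkd : 0 < k.det := hk.det_pos
  have hd1 : (g⁻¹ * h).det = g.det⁻¹ * h.det := by
    rw [Matrix.det_mul, Matrix.det_nonsing_inv, Ring.inverse_eq_inv']
  have hd2 : (h⁻¹ * k).det = h.det⁻¹ * k.det := by
    rw [Matrix.det_mul, Matrix.det_nonsing_inv, Ring.inverse_eq_inv']
  have hd : (g⁻¹ * k).det = g.det⁻¹ * k.det := by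
    rw [Matrix.det_mul, Matrix.det_nonsing_inv, Ring.inverse_eq_inv']
  have hd1pos : 0 < (g⁻¹ * h).det := by rw [hd1]; positivity
  have hd2pos : 0 < (h⁻¹ * k).det := by rw [hd2]; positivity
  have hdpos : 0 < (g⁻¹ * k).det := by rw [hd]; positivity
  have hdd : (g⁻¹ * k).det = (g⁻¹ * h).det * (h⁻¹ * k).det := by
    rw [hd, hd1, hd2]
    field_simp
  have htnn : 0 ≤ t := trace_inv_mul_nonneg hg hk
  have hchain : t ≤ t1 * t2 := trace_chain hg hh hk
  show ((1 / (n : ℝ)) * t) ^ n / (g⁻¹ * k).det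
      ≤ (n : ℝ) ^ n * (((1 / (n : ℝ)) * t1) ^ n / (g⁻¹ * h).det)
        * (((1 / (n : ℝ)) * t2) ^ n / (h⁻¹ * k).det)
  have hrhs : (n : ℝ) ^ n * (((1 / (n : ℝ)) * t1) ^ n / (g⁻¹ * h).det)
        * (((1 / (n : ℝ)) * t2) ^ n / (h⁻¹ * k).det)
      = ((1 / (n : ℝ)) * (t1 * t2)) ^ n / ((g⁻¹ * h).det * (h⁻¹ * k).det) := by
    rw [hd1, hd2]
    field_simp
    have hnn : (n:ℝ)^n * (n:ℝ)⁻¹^n = 1 := by rw [← mul_pow, mul_inv_cancel₀ hn0, one_pow]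
    linear_combination (t1 ^ n * (↑n)⁻¹ ^ n * t2 ^ n) * hnn
  rw [hrhs, ← hdd]
  refine (div_le_div_iff_of_pos_right hdpos).mpr ?_
  refine pow_le_pow_left₀ (by positivity) ?_ n
  exact mul_le_mul_of_nonneg_left hchain (by positivity)
end

section
/- For n×n real symmetric positive definite matrices g and h (n ≥ 1), with K²(g,h) = ((1/n)·tr(g⁻¹h))^n / det(g⁻¹h), one has K²(g,h) ≤ K²(h,g)^{n-1}. -/
open Finset

private lemma bern1 (n : ℕ) {A v : ℝ} (hA : 0 < A) (hv : 0 < v) :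
    v * A ^ n * ((n : ℝ) + 1) ^ (n + 1) ≤ ((n : ℝ) * A + v) ^ (n + 1) := by
  have hnA : (0:ℝ) < ((n:ℝ)+1) * A := by positivity
  set x : ℝ := (v - A) / (((n : ℝ) + 1) * A) with hxdef
  have hx2 : (-2 : ℝ) ≤ x := by
    rw [hxdef, le_div_iff₀ hnA]
    nlinarith [Nat.cast_nonneg (α := ℝ) n]
  have hb := one_add_mul_le_pow hx2 (n + 1)
  have h1x : 1 + x = ((n:ℝ) * A + v) / (((n:ℝ)+1) * A) := by
    rw [hxdef]; field_simp; ring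
  have h2 : 1 + ((n + 1 : ℕ) : ℝ) * x = v / A := by
    push_cast
    rw [hxdef]
    field_simp
    ring
  rw [h2, h1x, div_pow, div_le_div_iff₀ hA (by positivity)] at hb
  refine le_of_mul_le_mul_right ?_ hA
  calc v * A ^ n * ((n:ℝ) + 1) ^ (n + 1) * A
      = v * ((((n:ℝ)+1) * A) ^ (n+1)) := by rw [mul_pow]; ring
    _ ≤ ((n:ℝ) * A + v) ^ (n + 1) * A := hb

private lemma bern2 (m : ℕ) {A v : ℝ} (hA : 0 < A) (hv : 0 < v) :
    ((m:ℝ) + 2) ^ m * (A ^ (m+1) + v * ((m:ℝ)+1) * A ^ m) ≤ (((m:ℝ)+1) * A + v) ^ (m+1) := by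
  have hnA : (0:ℝ) < ((m:ℝ)+2) * A := by positivity
  set x : ℝ := (v - A) / (((m : ℝ) + 2) * A) with hxdef
  have hx2 : (-2 : ℝ) ≤ x := by
    rw [hxdef, le_div_iff₀ hnA]
    nlinarith [Nat.cast_nonneg (α := ℝ) m]
  have hb := one_add_mul_le_pow hx2 (m + 1)
  have h1x : 1 + x = (((m:ℝ)+1) * A + v) / (((m:ℝ)+2) * A) := by
    rw [hxdef]; field_simp; ring
  have h2 : 1 + ((m + 1 : ℕ) : ℝ) * x = (A + ((m:ℝ)+1) * v) / (((m:ℝ)+2) * A) := by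
    push_cast
    rw [hxdef]
    field_simp
    ring
  rw [h2, h1x, div_pow, div_le_div_iff₀ (by positivity) (by positivity)] at hb
  refine le_of_mul_le_mul_right ?_ hnA
  calc ((m:ℝ) + 2) ^ m * (A ^ (m+1) + v * ((m:ℝ)+1) * A ^ m) * (((m:ℝ)+2) * A)
      = (A + ((m:ℝ)+1) * v) * (((m:ℝ)+2) * A) ^ (m + 1) := by rw [mul_pow]; ring
    _ ≤ (((m:ℝ)+1) * A + v) ^ (m + 1) * (((m:ℝ)+2) * A) := hb

private lemma key {ι : Type*} [DecidableEq ι] (ν : ι → ℝ) :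
    ∀ s : Finset ι, (∀ i ∈ s, 0 < ν i) →
    (∏ i ∈ s, ν i ≤ ((∑ i ∈ s, ν i) / s.card) ^ s.card) ∧
    (∑ i ∈ s, ∏ j ∈ s.erase i, ν j ≤ s.card * ((∑ i ∈ s, ν i) / s.card) ^ (s.card - 1)) := by
  intro s
  induction s using Finset.induction_on with
  | empty => intro _; simp
  | @insert a t hat ih =>
    intro hν
    have hνt : ∀ i ∈ t, 0 < ν i := fun i hi => hν i (mem_insert_of_mem hi)
    have hva : 0 < ν a := hν a (mem_insert_self a t)
    obtain ⟨ih1, ih2⟩ := ih hνt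
    rcases t.eq_empty_or_nonempty with rfl | hne
    · simp [hva.le]
    obtain ⟨m, hm⟩ := Nat.exists_eq_succ_of_ne_zero hne.card_pos.ne'
    have hS : 0 < ∑ i ∈ t, ν i := Finset.sum_pos hνt hne
    set S := ∑ i ∈ t, ν i with hSdef
    rw [hm] at ih1 ih2
    simp only [Nat.succ_eq_add_one] at ih1 ih2
    push_cast at ih1 ih2
    have hA : 0 < S / ((m:ℝ)+1) := by positivity
    set A := S / ((m:ℝ)+1) with hAdef
    have hcA : ((m:ℝ)+1) * A = S := by rw [hAdef]; field_simp
    have ih1' : ∏ i ∈ t, ν i ≤ A ^ (m+1) := ih1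
    have ih2' : ∑ i ∈ t, ∏ j ∈ t.erase i, ν j ≤ ((m:ℝ)+1) * A ^ m := by
      simpa using ih2
    have hprodpos : 0 < ∏ i ∈ t, ν i := Finset.prod_pos hνt
    constructor
    · rw [Finset.prod_insert hat, Finset.sum_insert hat,
        Finset.card_insert_of_notMem hat, hm]
      simp only [Nat.succ_eq_add_one]
      have hb := bern1 (m+1) hA hva
      push_cast at hb ⊢
      rw [← hSdef, div_pow, le_div_iff₀ (by positivity)]
      calc (ν a * ∏ i ∈ t, ν i) * ((m:ℝ) + 1 + 1) ^ (m + 1 + 1)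
          ≤ ν a * A ^ (m+1) * ((m:ℝ) + 1 + 1) ^ (m + 1 + 1) := by
            have h0 : (0:ℝ) ≤ ((m:ℝ)+1+1)^(m+1+1) := by positivity
            exact mul_le_mul_of_nonneg_right
              (mul_le_mul_of_nonneg_left ih1' hva.le) h0
        _ ≤ (((m:ℝ)+1) * A + ν a) ^ (m + 1 + 1) := hb
        _ = (ν a + S) ^ (m + 1 + 1) := by rw [hcA]; ring
    · have hsum : ∑ i ∈ insert a t, ∏ j ∈ (insert a t).erase i, ν j
          = ∏ j ∈ t, ν j + ν a * ∑ i ∈ t, ∏ j ∈ t.erase i, ν j := by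
        rw [Finset.sum_insert hat, Finset.erase_insert hat, Finset.mul_sum]
        congr 1
        refine Finset.sum_congr rfl fun i hi => ?_
        rw [Finset.erase_insert_of_ne (ne_of_mem_of_not_mem hi hat).symm,
          Finset.prod_insert (fun ha' => hat (Finset.mem_of_mem_erase ha'))]
      rw [hsum, Finset.sum_insert hat, Finset.card_insert_of_notMem hat, hm]
      simp only [Nat.succ_eq_add_one]
      have hb := bern2 m hA hva
      push_cast
      rw [← hSdef]
      have hR : ((m:ℝ) + 1 + 1) * ((ν a + S)/((m:ℝ)+1+1))^(m + 1)
          = (ν a + S)^(m+1)/((m:ℝ)+2)^m := by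
        rw [div_pow]
        have h2 : ((m:ℝ)+1+1) = ((m:ℝ)+2) := by ring
        rw [h2]
        field_simp
        ring
      rw [hR, le_div_iff₀ (by positivity)]
      calc (∏ j ∈ t, ν j + ν a * ∑ i ∈ t, ∏ j ∈ t.erase i, ν j) * ((m:ℝ)+2)^m
          ≤ (A ^ (m+1) + ν a * (((m:ℝ)+1) * A ^ m)) * ((m:ℝ)+2)^m := by
            have h0 : (0:ℝ) ≤ ((m:ℝ)+2)^m := by positivity
            refine mul_le_mul_of_nonneg_right (add_le_add ih1' ?_) h0
            exact mul_le_mul_of_nonneg_left ih2' hva.le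
        _ ≤ (((m:ℝ)+1) * A + ν a) ^ (m+1) := by
            calc (A ^ (m+1) + ν a * (((m:ℝ)+1) * A ^ m)) * ((m:ℝ)+2)^m
                = ((m:ℝ) + 2) ^ m * (A ^ (m+1) + ν a * ((m:ℝ)+1) * A ^ m) := by ring
              _ ≤ _ := hb
        _ = (ν a + S) ^ (m+1) := by rw [hcA]; ring

open Matrix

open scoped MatrixOrder in
private lemma exists_mu (n : ℕ) (g h : Matrix (Fin n) (Fin n) ℝ)
    (hg : g.PosDef) (hh : h.PosDef) :
    ∃ μ : Fin n → ℝ, (∀ i, 0 < μ i) ∧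
      (g⁻¹ * h).trace = ∑ i, μ i ∧ (g⁻¹ * h).det = ∏ i, μ i ∧
      (h⁻¹ * g).trace = ∑ i, (μ i)⁻¹ ∧ (h⁻¹ * g).det = ∏ i, (μ i)⁻¹ := by
  set a := CFC.sqrt g with hadef
  have haa : a * a = g := CFC.sqrt_mul_sqrt_self g hg.posSemidef.nonneg
  have haH : a.IsHermitian := (CFC.sqrt_nonneg g).posSemidef.isHermitian
  have hdetg : 0 < g.det := hg.det_pos
  have hdeth : 0 < h.det := hh.det_pos
  have hdeta : a.det ≠ 0 := by
    intro h0
    have : a.det * a.det = g.det := by rw [← Matrix.det_mul, haa]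
    rw [h0, mul_zero] at this
    exact hdetg.ne this
  have haU : IsUnit a.det := hdeta.isUnit
  have hgU : IsUnit g.det := hdetg.ne'.isUnit
  have hhU : IsUnit h.det := hdeth.ne'.isUnit
  have haiH : (a⁻¹)ᴴ = a⁻¹ := by rw [Matrix.conjTranspose_nonsing_inv, haH.eq]
  set S := a⁻¹ * h * a⁻¹ with hSdef
  have hSpsd : S.PosSemidef := by
    have := hh.posSemidef.conjTranspose_mul_mul_same a⁻¹
    rwa [haiH] at this
  have hSH : S.IsHermitian := hSpsd.isHermitian
  -- trace and det identities
  have tr1 : (g⁻¹ * h).trace = S.trace := by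
    rw [← haa, Matrix.mul_inv_rev, mul_assoc, trace_mul_comm, hSdef, mul_assoc]
  have det1 : (g⁻¹ * h).det = S.det := by
    rw [← haa, hSdef]
    simp only [Matrix.det_mul, Matrix.det_nonsing_inv, Ring.inverse_eq_inv']
    rw [mul_inv]
    ring
  have hdetS : 0 < S.det := by
    rw [← det1, Matrix.det_mul, Matrix.det_nonsing_inv, Ring.inverse_eq_inv']
    positivity
  -- eigenvalues
  set μ := hSH.eigenvalues with hμdef
  have hμnn : ∀ i, 0 ≤ μ i := hSpsd.eigenvalues_nonneg
  have hdetprod : S.det = ∏ i, μ i := by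
    have := hSH.det_eq_prod_eigenvalues
    simpa using this
  have hμpos : ∀ i, 0 < μ i := by
    intro i
    rcases (hμnn i).lt_or_eq with h' | h'
    · exact h'
    · exfalso
      have : S.det = 0 := by
        rw [hdetprod]
        exact Finset.prod_eq_zero (Finset.mem_univ i) h'.symm
      exact hdetS.ne this.symm
  -- spectral theorem
  set U : Matrix (Fin n) (Fin n) ℝ := ↑hSH.eigenvectorUnitary with hUdef
  have hUU : U * star U = 1 := Matrix.mem_unitaryGroup_iff.mp hSH.eigenvectorUnitary.2
  have hUU' : star U * U = 1 := Matrix.mem_unitaryGroup_iff'.mp hSH.eigenvectorUnitary.2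
  have hspec : S = U * Matrix.diagonal μ * star U := by
    have := hSH.spectral_theorem
    simpa [RCLike.ofReal_real_eq_id] using this
  have trS : S.trace = ∑ i, μ i := by
    rw [hspec, trace_mul_cycle, hUU', one_mul, Matrix.trace_diagonal]
  -- inverse of S
  have hDD : Matrix.diagonal μ * Matrix.diagonal (fun i => (μ i)⁻¹) = 1 := by
    rw [Matrix.diagonal_mul_diagonal]
    convert Matrix.diagonal_one using 2
    funext i
    exact mul_inv_cancel₀ (hμpos i).ne'
  have hSinv : S⁻¹ = U * Matrix.diagonal (fun i => (μ i)⁻¹) * star U := by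
    apply Matrix.inv_eq_right_inv
    calc S * (U * Matrix.diagonal (fun i => (μ i)⁻¹) * star U)
        = U * Matrix.diagonal μ * (star U * U) * Matrix.diagonal (fun i => (μ i)⁻¹)
            * star U := by rw [hspec]; noncomm_ring
      _ = U * (Matrix.diagonal μ * Matrix.diagonal (fun i => (μ i)⁻¹)) * star U := by
            rw [hUU']; noncomm_ring
      _ = 1 := by rw [hDD, mul_one, hUU]
  have trSinv : S⁻¹.trace = ∑ i, (μ i)⁻¹ := by
    rw [hSinv, trace_mul_cycle, hUU', one_mul, Matrix.trace_diagonal]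
  -- h⁻¹ * g
  have hS2 : a * h⁻¹ * a = S⁻¹ := by
    symm
    apply Matrix.inv_eq_right_inv
    calc S * (a * h⁻¹ * a)
        = a⁻¹ * h * (a⁻¹ * a) * h⁻¹ * a := by rw [hSdef]; noncomm_ring
      _ = a⁻¹ * (h * h⁻¹) * a := by rw [Matrix.nonsing_inv_mul a haU]; noncomm_ring
      _ = 1 := by rw [Matrix.mul_nonsing_inv h hhU, mul_one, Matrix.nonsing_inv_mul a haU]
  have tr2 : (h⁻¹ * g).trace = S⁻¹.trace := by
    rw [← haa, ← mul_assoc, trace_mul_comm, ← mul_assoc, hS2]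
  have det2 : (h⁻¹ * g).det = ∏ i, (μ i)⁻¹ := by
    rw [Finset.prod_inv_distrib, ← hdetprod, ← det1]
    simp only [Matrix.det_mul, Matrix.det_nonsing_inv, Ring.inverse_eq_inv']
    rw [mul_inv, inv_inv]
    ring
  exact ⟨μ, hμpos, by rw [tr1, trS], by rw [det1, hdetprod], by rw [tr2, trSinv], det2⟩

theorem stmt_3 (n : ℕ) (hn : 1 ≤ n) (g h : Matrix (Fin n) (Fin n) ℝ)
    (hg : g.PosDef) (hh : h.PosDef) :
    K2 g h ≤ K2 h g ^ (n - 1) := by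
  have hn0 : (0:ℝ) < n := by exact_mod_cast Nat.lt_of_lt_of_le Nat.zero_lt_one hn
  obtain ⟨μ, hμ, tr1, det1, tr2, det2⟩ := exists_mu n g h hg hh
  have hne : (Finset.univ : Finset (Fin n)).Nonempty := by
    rw [Finset.univ_nonempty_iff]
    exact Fin.pos_iff_nonempty.mp hn
  set P := ∏ i, μ i with hPdef
  set Ssum := ∑ i, μ i with hSsumdef
  set Q := ∑ i, (μ i)⁻¹ with hQdef
  have hP : 0 < P := Finset.prod_pos (fun i _ => hμ i)
  have hSsum : 0 < Ssum := Finset.sum_pos (fun i _ => hμ i) hne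
  have hQ : 0 < Q := Finset.sum_pos (fun i _ => inv_pos.mpr (hμ i)) hne
  -- key inequality for ν = μ⁻¹
  set ν : Fin n → ℝ := fun i => (μ i)⁻¹ with hνdef
  have hν : ∀ i ∈ (Finset.univ : Finset (Fin n)), 0 < ν i :=
    fun i _ => inv_pos.mpr (hμ i)
  obtain ⟨-, k2⟩ := key ν Finset.univ hν
  have hcard : ((Finset.univ : Finset (Fin n)).card : ℝ) = (n : ℝ) := by simp
  have hcardn : (Finset.univ : Finset (Fin n)).card = n := by simp
  have hsumν : ∑ i, ν i = Q := rfl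
  have hprodν : ∏ i, ν i = P⁻¹ := by
    rw [hνdef, hPdef, Finset.prod_inv_distrib]
  have herase : ∀ i : Fin n, ∏ j ∈ Finset.univ.erase i, ν j = P⁻¹ * μ i := by
    intro i
    have h1 : (∏ j ∈ Finset.univ.erase i, ν j) * ν i = P⁻¹ :=
      (Finset.prod_erase_mul Finset.univ ν (Finset.mem_univ i)).trans hprodν
    have hνi : ν i ≠ 0 := (hν i (Finset.mem_univ i)).ne'
    have h2 := eq_div_of_mul_eq hνi h1
    rw [h2]
    show P⁻¹ / (μ i)⁻¹ = P⁻¹ * μ i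
    rw [div_eq_mul_inv, inv_inv]
  have hLHS : ∑ i, ∏ j ∈ Finset.univ.erase i, ν j = P⁻¹ * Ssum := by
    rw [Finset.sum_congr rfl (fun i _ => herase i), ← Finset.mul_sum, ← hSsumdef]
  rw [hLHS, hcardn, hsumν] at k2
  -- k2 : P⁻¹ * Ssum ≤ n * (Q / n) ^ (n - 1)
  have keyineq : Ssum / n ≤ (Q / n) ^ (n - 1) * P := by
    have hX : (0:ℝ) ≤ (Q / n) ^ (n-1) := by positivity
    have := mul_le_mul_of_nonneg_left k2 hP.le
    rw [← mul_assoc, mul_inv_cancel₀ hP.ne', one_mul] at this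
    rw [div_le_iff₀ hn0]
    calc Ssum ≤ P * ((n:ℝ) * (Q / n) ^ (n - 1)) := this
      _ = (Q / n) ^ (n - 1) * P * n := by ring
  -- conclude
  simp only [K2]
  rw [tr1, det1, tr2, det2]
  have e1 : (1/(n:ℝ)) * Ssum = Ssum / n := by ring
  have e2 : (1/(n:ℝ)) * Q = Q / n := by ring
  have e3 : (Q/(n:ℝ))^n / P⁻¹ = (Q/(n:ℝ))^n * P := by
    rw [div_eq_mul_inv, inv_inv]
  rw [e1, e2, hprodν, e3]
  rw [div_le_iff₀ hP]
  have hpow := pow_le_pow_left₀ (by positivity) keyineq n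
  calc (Ssum / n) ^ n ≤ ((Q / n) ^ (n - 1) * P) ^ n := hpow
    _ = ((Q / n) ^ n * P) ^ (n - 1) * P := by
        rw [mul_pow, mul_pow, ← pow_mul, ← pow_mul, Nat.mul_comm, mul_assoc, ← pow_succ,
          Nat.sub_add_cancel hn]
end

section
/- For an n×n real symmetric positive definite matrix A (n ≥ 1), the adjugate satisfies tr(Adj(A)) ≤ n^{2-n} · tr(A)^{n-1}. -/
open Matrix Finset

private lemma young_aux (m : ℕ) (a b : ℝ) (ha : 0 ≤ a) (hb : 0 ≤ b) :
    ((m : ℝ) + 1) * (a * b ^ m) ≤ a ^ (m + 1) + (m : ℝ) * b ^ (m + 1) := by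
  induction m with
  | zero => simp
  | succ k ih =>
    simp only [pow_succ] at ih ⊢
    push_cast
    have hx : 0 ≤ a ^ k := pow_nonneg ha k
    have hy : 0 ≤ b ^ k := pow_nonneg hb k
    have key : a ^ k * a * b + a * (b ^ k * b) ≤ a ^ k * a * a + b ^ k * b * b := by
      rcases le_total a b with h | h
      · have h1 : a ^ k * a ≤ b ^ k * b := by
          simpa [pow_succ] using pow_le_pow_left₀ ha h (k + 1)
        nlinarith [mul_nonneg (sub_nonneg.2 h1) (sub_nonneg.2 h)]
      · have h1 : b ^ k * b ≤ a ^ k * a := by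
          simpa [pow_succ] using pow_le_pow_left₀ hb h (k + 1)
        nlinarith [mul_nonneg (sub_nonneg.2 h1) (sub_nonneg.2 h)]
    nlinarith [mul_le_mul_of_nonneg_right ih hb, key]

private lemma amgm {ι : Type*} [DecidableEq ι] (s : Finset ι) (f : ι → ℝ) (hf : ∀ i ∈ s, 0 ≤ f i) :
    ∏ i ∈ s, f i ≤ ((∑ i ∈ s, f i) / s.card) ^ s.card := by
  induction s using Finset.induction_on with
  | empty => simp
  | @insert a s ha ih =>
    have ht : 0 ≤ f a := hf a (mem_insert_self a s)
    have hfs : ∀ i ∈ s, 0 ≤ f i := fun i hi => hf i (mem_insert_of_mem hi)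
    rw [Finset.prod_insert ha, Finset.sum_insert ha, Finset.card_insert_of_notMem ha]
    rcases Nat.eq_zero_or_pos s.card with h0 | hpos
    · rw [Finset.card_eq_zero] at h0
      subst h0
      simp
    · obtain ⟨k, hk⟩ : ∃ k, s.card = k + 1 := ⟨s.card - 1, (Nat.succ_pred_eq_of_pos hpos).symm⟩
      set S := ∑ i ∈ s, f i with hSdef
      have hS : 0 ≤ S := Finset.sum_nonneg hfs
      set b : ℝ := S / ((k : ℝ) + 1) with hbdef
      set aa : ℝ := (f a + S) / ((k : ℝ) + 2) with haadef
      have hb0 : 0 ≤ b := by positivity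
      have haa0 : 0 ≤ aa := by positivity
      have hSb : S = ((k : ℝ) + 1) * b := by rw [hbdef]; field_simp
      have hta : f a + S = ((k : ℝ) + 2) * aa := by rw [haadef]; field_simp
      have hprod : ∏ i ∈ s, f i ≤ b ^ (k + 1) := by
        have := ih hfs
        rw [hk] at this
        push_cast at this
        exact this
      have hyoung := young_aux k aa b haa0 hb0
      have hchain : f a * ∏ i ∈ s, f i ≤ f a * b ^ (k + 1) :=
        mul_le_mul_of_nonneg_left hprod ht
      have hfin : f a * b ^ (k + 1) ≤ aa ^ (k + 2) := by
        have ht' : f a = ((k : ℝ) + 2) * aa - ((k : ℝ) + 1) * b := by linarith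
        rw [ht']
        have hy2 := young_aux (k + 1) aa b haa0 hb0
        push_cast at hy2
        simp only [pow_succ] at hy2 ⊢
        nlinarith [hy2]
      calc f a * ∏ i ∈ s, f i ≤ f a * b ^ (k + 1) := hchain
        _ ≤ aa ^ (k + 2) := hfin
        _ = ((f a + S) / ((k : ℝ) + 2)) ^ (k + 2) := by rw [haadef]
        _ = ((f a + S) / ↑(#s + 1)) ^ (#s + 1) := by rw [hk]; push_cast; ring_nf

private lemma maclaurin {ι : Type*} [DecidableEq ι] (s : Finset ι) (f : ι → ℝ)
    (hf : ∀ i ∈ s, 0 ≤ f i) :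
    ∑ i ∈ s, ∏ j ∈ s.erase i, f j ≤ s.card * ((∑ i ∈ s, f i) / s.card) ^ (s.card - 1) := by
  induction s using Finset.induction_on with
  | empty => simp
  | @insert a s ha ih =>
    have ht : 0 ≤ f a := hf a (mem_insert_self a s)
    have hfs : ∀ i ∈ s, 0 ≤ f i := fun i hi => hf i (mem_insert_of_mem hi)
    have hsum : ∑ i ∈ insert a s, ∏ j ∈ (insert a s).erase i, f j
        = ∏ j ∈ s, f j + f a * ∑ i ∈ s, ∏ j ∈ s.erase i, f j := by
      rw [Finset.sum_insert ha, Finset.erase_insert ha]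
      congr 1
      rw [Finset.mul_sum]
      refine Finset.sum_congr rfl fun i hi => ?_
      have hia : a ≠ i := fun h => ha (h ▸ hi)
      rw [Finset.erase_insert_of_ne hia,
        Finset.prod_insert (fun h => ha (Finset.mem_of_mem_erase h))]
    rw [hsum, Finset.sum_insert ha, Finset.card_insert_of_notMem ha]
    rcases Nat.eq_zero_or_pos s.card with h0 | hpos
    · rw [Finset.card_eq_zero] at h0
      subst h0
      simp
    · obtain ⟨k, hk⟩ : ∃ k, s.card = k + 1 := ⟨s.card - 1, (Nat.succ_pred_eq_of_pos hpos).symm⟩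
      set S := ∑ i ∈ s, f i with hSdef
      have hS : 0 ≤ S := Finset.sum_nonneg hfs
      set b : ℝ := S / ((k : ℝ) + 1) with hbdef
      set aa : ℝ := (f a + S) / ((k : ℝ) + 2) with haadef
      have hb0 : 0 ≤ b := by positivity
      have haa0 : 0 ≤ aa := by positivity
      have hSb : S = ((k : ℝ) + 1) * b := by rw [hbdef]; field_simp
      have hta : f a + S = ((k : ℝ) + 2) * aa := by rw [haadef]; field_simp
      have hprod : ∏ i ∈ s, f i ≤ b ^ (k + 1) := by
        have := amgm s f hfs
        rw [hk, ← hSdef] at this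
        push_cast at this
        exact this
      have hE : ∑ i ∈ s, ∏ j ∈ s.erase i, f j ≤ ((k : ℝ) + 1) * b ^ k := by
        have := ih hfs
        rw [hk] at this
        simpa using this
      have hEnn : f a * ∑ i ∈ s, ∏ j ∈ s.erase i, f j ≤ f a * (((k : ℝ) + 1) * b ^ k) :=
        mul_le_mul_of_nonneg_left hE ht
      have hfin : b ^ (k + 1) + f a * (((k : ℝ) + 1) * b ^ k) ≤ ((k : ℝ) + 2) * aa ^ (k + 1) := by
        have ht' : f a = ((k : ℝ) + 2) * aa - ((k : ℝ) + 1) * b := by linarith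
        rw [ht']
        have hy := mul_le_mul_of_nonneg_left (young_aux k aa b haa0 hb0)
          (show (0:ℝ) ≤ (k : ℝ) + 2 by positivity)
        simp only [pow_succ] at hy ⊢
        nlinarith [hy]
      have hgoal : ∏ j ∈ s, f j + f a * ∑ i ∈ s, ∏ j ∈ s.erase i, f j
          ≤ ((k : ℝ) + 2) * aa ^ (k + 1) := by
        calc ∏ j ∈ s, f j + f a * ∑ i ∈ s, ∏ j ∈ s.erase i, f j
            ≤ b ^ (k + 1) + f a * (((k : ℝ) + 1) * b ^ k) := add_le_add hprod hEnn
          _ ≤ ((k : ℝ) + 2) * aa ^ (k + 1) := hfin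
      calc ∏ j ∈ s, f j + f a * ∑ i ∈ s, ∏ j ∈ s.erase i, f j
          ≤ ((k : ℝ) + 2) * aa ^ (k + 1) := hgoal
        _ = _ := by rw [hk, haadef]; push_cast; ring_nf

theorem stmt_4 (n : ℕ) (hn : 1 ≤ n) (A : Matrix (Fin n) (Fin n) ℝ)
    (hA : A.PosDef) :
    A.adjugate.trace ≤ (n : ℝ) ^ ((2 : ℤ) - (n : ℤ)) * A.trace ^ (n - 1) := by
  classical
  have hH : A.IsHermitian := hA.1
  set lam := hH.eigenvalues with hlam
  have hpos : ∀ i, 0 < lam i := fun i => hA.eigenvalues_pos i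
  set U : Matrix (Fin n) (Fin n) ℝ := (hH.eigenvectorUnitary : Matrix (Fin n) (Fin n) ℝ)
    with hUdef
  have hU1 : star U * U = 1 := mem_unitaryGroup_iff'.mp hH.eigenvectorUnitary.2
  have hspec : A = U * diagonal lam * star U := by
    have := hH.spectral_theorem
    simpa [RCLike.ofReal_real_eq_id] using this
  -- trace of A
  have htrA : A.trace = ∑ i, lam i := by
    conv_lhs => rw [hspec]
    rw [trace_mul_cycle, hU1, one_mul, trace_diagonal]
  -- trace of adjugate
  have htradj : A.adjugate.trace = ∑ i, ∏ j ∈ Finset.univ.erase i, lam j := by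
    conv_lhs => rw [hspec]
    rw [adjugate_mul_distrib, adjugate_mul_distrib, ← mul_assoc, trace_mul_cycle,
      ← adjugate_mul_distrib, hU1, adjugate_one, one_mul,
      adjugate_diagonal, trace_diagonal]
  rw [htradj, htrA]
  have hmac := maclaurin (Finset.univ : Finset (Fin n)) lam
    (fun i _ => (hpos i).le)
  rw [Finset.card_univ, Fintype.card_fin] at hmac
  refine hmac.trans (le_of_eq ?_)
  have hn0 : (n : ℝ) ≠ 0 := by positivity
  have hnn : (n : ℝ) ^ (n - 1) * (n : ℝ) = (n : ℝ) ^ n := by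
    rw [← pow_succ]
    congr 1
    omega
  rw [div_pow, zpow_sub₀ hn0, zpow_natCast, zpow_two]
  field_simp
  rw [← hnn]
  ring
end

section
/- For any n×n real invertible matrix B (n ≥ 2), the Hilbert–Schmidt (Frobenius) norm of the adjugate satisfies ‖Adj(B)‖_HS ≤ n^{-(n-2)/2} · ‖B‖_HS^{n-1}. -/
open Matrix

/-- AM-GM: `m^m * ∏ f ≤ (∑ f)^m` for nonneg `f` on a finset of card `m`. -/
lemma my_amgm {ι : Type*} (t : Finset ι) (f : ι → ℝ) (hf : ∀ i ∈ t, 0 ≤ f i) :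
    (t.card : ℝ) ^ t.card * ∏ i ∈ t, f i ≤ (∑ i ∈ t, f i) ^ t.card := by
  rcases Nat.eq_zero_or_pos t.card with h0 | hpos
  · simp [Finset.card_eq_zero.mp h0]
  set m := t.card with hm
  have hm0 : (m : ℝ) ≠ 0 := Nat.cast_ne_zero.2 hpos.ne'
  have key := Real.geom_mean_le_arith_mean_weighted t (fun _ => (m : ℝ)⁻¹) f
    (fun i _ => by positivity) (by simp [Finset.sum_const, ← hm]; field_simp) hf
  have h1 : (∏ i ∈ t, f i ^ ((m : ℝ)⁻¹)) ^ m = ∏ i ∈ t, f i := by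
    rw [← Finset.prod_pow]
    exact Finset.prod_congr rfl fun i hi => Real.rpow_inv_natCast_pow (hf i hi) hpos.ne'
  have h2 : ∑ i ∈ t, (m : ℝ)⁻¹ * f i = (m : ℝ)⁻¹ * ∑ i ∈ t, f i := by
    rw [Finset.mul_sum]
  have hL : 0 ≤ ∏ i ∈ t, f i ^ ((m : ℝ)⁻¹) :=
    Finset.prod_nonneg fun i hi => Real.rpow_nonneg (hf i hi) _
  calc (m : ℝ) ^ m * ∏ i ∈ t, f i
      = (m : ℝ) ^ m * (∏ i ∈ t, f i ^ ((m : ℝ)⁻¹)) ^ m := by rw [h1]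
    _ ≤ (m : ℝ) ^ m * ((m : ℝ)⁻¹ * ∑ i ∈ t, f i) ^ m := by
        have := pow_le_pow_left₀ hL (key.trans (le_of_eq h2)) m
        exact mul_le_mul_of_nonneg_left this (by positivity)
    _ = (∑ i ∈ t, f i) ^ m := by
        rw [mul_pow, ← mul_assoc, ← mul_pow, mul_inv_cancel₀ hm0, one_pow, one_mul]

lemma step_ineq (m : ℕ) (hm : 1 ≤ m) (s y : ℝ) (hs : 0 ≤ s) (hy : 0 ≤ y) :
    ((m : ℝ) + 1) ^ (m - 1) * s ^ (m - 1) * (s + (m : ℝ) ^ 2 * y)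
      ≤ (m : ℝ) ^ m * (s + y) ^ m := by
  set g : ℕ → ℝ := fun k => if k < m - 1 then ((m : ℝ) + 1) * s else s + (m : ℝ) ^ 2 * y with hg
  have hgpos : ∀ k ∈ Finset.range m, 0 ≤ g k := by
    intro k _
    simp only [hg]
    split <;> positivity
  have hamgm := my_amgm (Finset.range m) g hgpos
  rw [Finset.card_range] at hamgm
  have hprod : ∏ k ∈ Finset.range m, g k = (((m : ℝ) + 1) * s) ^ (m - 1) * (s + (m : ℝ) ^ 2 * y) := by
    conv_lhs => rw [show m = (m - 1) + 1 by omega]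
    rw [Finset.prod_range_succ,
      Finset.prod_congr rfl (fun k hk => if_pos (Finset.mem_range.mp hk)),
      Finset.prod_const, Finset.card_range]
    congr 1
    exact if_neg (lt_irrefl _)
  have hsum : ∑ k ∈ Finset.range m, g k = (m : ℝ) ^ 2 * (s + y) := by
    conv_lhs => rw [show m = (m - 1) + 1 by omega]
    rw [Finset.sum_range_succ,
      Finset.sum_congr rfl (fun k hk => if_pos (Finset.mem_range.mp hk)),
      Finset.sum_const, Finset.card_range, nsmul_eq_mul]
    have hgm : g (m - 1) = s + (m : ℝ) ^ 2 * y := if_neg (lt_irrefl _)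
    rw [hgm]
    have hcast : ((m - 1 : ℕ) : ℝ) = (m : ℝ) - 1 := by
      push_cast [Nat.cast_sub hm]; ring
    rw [hcast]; ring
  rw [hprod, hsum] at hamgm
  have hmpos : (0 : ℝ) < (m : ℝ) ^ m := by
    have : (0 : ℝ) < (m : ℝ) := by exact_mod_cast hm
    positivity
  have hRHS : ((m : ℝ) ^ 2 * (s + y)) ^ m = (m : ℝ) ^ m * ((m : ℝ) ^ m * (s + y) ^ m) := by
    rw [mul_pow, ← pow_mul, two_mul, pow_add]; ring
  rw [hRHS] at hamgm
  have := le_of_mul_le_mul_left hamgm hmpos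
  calc ((m : ℝ) + 1) ^ (m - 1) * s ^ (m - 1) * (s + (m : ℝ) ^ 2 * y)
      = (((m : ℝ) + 1) * s) ^ (m - 1) * (s + (m : ℝ) ^ 2 * y) := by rw [mul_pow]
    _ ≤ (m : ℝ) ^ m * (s + y) ^ m := this

/-- Maclaurin-type bound for the (n-1)-st elementary symmetric polynomial. -/
lemma esymm_le {ι : Type*} [DecidableEq ι] (t : Finset ι) (f : ι → ℝ) :
    (∀ i ∈ t, 0 ≤ f i) →
    (t.card : ℝ) ^ (t.card - 2) * ∑ i ∈ t, ∏ j ∈ t.erase i, f j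
      ≤ (∑ i ∈ t, f i) ^ (t.card - 1) := by
  induction t using Finset.cons_induction with
  | empty => intro _; simp
  | cons a t ha ih =>
    intro hf
    have hy : 0 ≤ f a := hf a (Finset.mem_cons_self a t)
    have hf' : ∀ i ∈ t, 0 ≤ f i := fun i hi => hf i (Finset.mem_cons.2 (Or.inr hi))
    set m := t.card with hmdef
    have hcard : (Finset.cons a t ha).card = m + 1 := Finset.card_cons ha
    have hE : ∑ i ∈ Finset.cons a t ha, ∏ j ∈ (Finset.cons a t ha).erase i, f j
        = ∏ j ∈ t, f j + f a * ∑ i ∈ t, ∏ j ∈ t.erase i, f j := by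
      rw [Finset.sum_cons]
      congr 1
      · rw [Finset.erase_cons ha]
      · rw [Finset.mul_sum]
        refine Finset.sum_congr rfl fun i hi => ?_
        have hne : a ≠ i := fun h => ha (h ▸ hi)
        rw [Finset.erase_cons_of_ne ha hne, Finset.prod_cons]
    rw [hcard, hE, Finset.sum_cons]
    have hm2 : m + 1 - 2 = m - 1 := by omega
    have hm1 : m + 1 - 1 = m := by omega
    rw [hm2, hm1]
    set s := ∑ i ∈ t, f i with hsdef
    set P := ∏ j ∈ t, f j with hPdef
    set E := ∑ i ∈ t, ∏ j ∈ t.erase i, f j with hEdef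
    have hs : 0 ≤ s := Finset.sum_nonneg hf'
    have hPnn : 0 ≤ P := Finset.prod_nonneg hf'
    have hEnn : 0 ≤ E :=
      Finset.sum_nonneg fun i _ => Finset.prod_nonneg fun j hj => hf' j (Finset.mem_of_mem_erase hj)
    rcases Nat.eq_zero_or_pos m with h0 | hm
    · have ht : t = ∅ := Finset.card_eq_zero.mp h0
      simp [hsdef, hPdef, hEdef, ht, h0]
    · have hP : (m : ℝ) ^ m * P ≤ s ^ m := my_amgm t f hf'
      have hE' : (m : ℝ) ^ (m - 2) * E ≤ s ^ (m - 1) := ih hf'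
      have hstep := step_ineq m hm s (f a) hs hy
      have hpow : (m : ℝ) ^ m = (m : ℝ) ^ 2 * (m : ℝ) ^ (m - 2) := by
        rcases eq_or_lt_of_le (show 1 ≤ m from hm) with h1 | h2
        · rw [← h1]; norm_num
        · rw [← pow_add]; congr 1; omega
      have hsm : s ^ m = s ^ (m - 1) * s := by
        conv_lhs => rw [show m = (m - 1) + 1 by omega]
        rw [pow_succ]
      have hmpos : (0 : ℝ) < (m : ℝ) ^ m := by
        have : (0 : ℝ) < (m : ℝ) := by exact_mod_cast hm
        positivity
      have chain : (m : ℝ) ^ m * (((m : ℝ) + 1) ^ (m - 1) * (P + f a * E))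
          ≤ (m : ℝ) ^ m * ((f a + s) ^ m) := by
        calc (m : ℝ) ^ m * (((m : ℝ) + 1) ^ (m - 1) * (P + f a * E))
            = ((m : ℝ) + 1) ^ (m - 1) * ((m : ℝ) ^ m * P)
              + ((m : ℝ) + 1) ^ (m - 1) * (f a * ((m : ℝ) ^ 2 * ((m : ℝ) ^ (m - 2) * E))) := by
              rw [hpow]; ring
          _ ≤ ((m : ℝ) + 1) ^ (m - 1) * (s ^ m)
              + ((m : ℝ) + 1) ^ (m - 1) * (f a * ((m : ℝ) ^ 2 * s ^ (m - 1))) := by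
              have t1 : ((m : ℝ) + 1) ^ (m - 1) * ((m : ℝ) ^ m * P)
                  ≤ ((m : ℝ) + 1) ^ (m - 1) * (s ^ m) :=
                mul_le_mul_of_nonneg_left hP (by positivity)
              have t2 : ((m : ℝ) + 1) ^ (m - 1) * (f a * ((m : ℝ) ^ 2 * ((m : ℝ) ^ (m - 2) * E)))
                  ≤ ((m : ℝ) + 1) ^ (m - 1) * (f a * ((m : ℝ) ^ 2 * s ^ (m - 1))) := by
                refine mul_le_mul_of_nonneg_left ?_ (by positivity)
                refine mul_le_mul_of_nonneg_left ?_ hy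
                exact mul_le_mul_of_nonneg_left hE' (by positivity)
              linarith
          _ = ((m : ℝ) + 1) ^ (m - 1) * s ^ (m - 1) * (s + (m : ℝ) ^ 2 * f a) := by
              rw [hsm]; ring
          _ ≤ (m : ℝ) ^ m * (s + f a) ^ m := hstep
          _ = (m : ℝ) ^ m * ((f a + s) ^ m) := by rw [add_comm s (f a)]
      have := le_of_mul_le_mul_left chain hmpos
      calc ((((m + 1) : ℕ)) : ℝ) ^ (m - 1) * (P + f a * E)
          = ((m : ℝ) + 1) ^ (m - 1) * (P + f a * E) := by push_cast; ring
        _ ≤ (f a + s) ^ m := this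

set_option maxHeartbeats 1000000 in
theorem stmt_5 (n : ℕ) (hn : 2 ≤ n) (B : Matrix (Fin n) (Fin n) ℝ)
    (hB : IsUnit B.det) :
    Real.sqrt ((B.adjugate.transpose * B.adjugate).trace) ≤
      (n : ℝ) ^ (-(((n : ℝ) - 2) / 2)) * Real.sqrt ((B.transpose * B).trace) ^ (n - 1) := by
  have hn0 : (0 : ℝ) < (n : ℝ) := by exact_mod_cast (by omega : 0 < n)
  set A := B * Bᵀ with hAdef
  have hps : A.PosSemidef := by
    rw [hAdef]
    have h := Matrix.posSemidef_self_mul_conjTranspose B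
    rwa [Matrix.conjTranspose_eq_transpose_of_trivial] at h
  have hA : A.IsHermitian := hps.1
  have hlam : ∀ i, 0 ≤ hA.eigenvalues i := hps.eigenvalues_nonneg
  set lam := hA.eigenvalues with hlamdef
  set U : Matrix (Fin n) (Fin n) ℝ := (hA.eigenvectorUnitary : Matrix (Fin n) (Fin n) ℝ) with hU
  have hsp : A = U * Matrix.diagonal lam * star U := by
    have h := hA.spectral_theorem
    rwa [RCLike.ofReal_real_eq_id, Function.id_comp] at h
  have hUU : star U * U = 1 := Matrix.UnitaryGroup.star_mul_self hA.eigenvectorUnitary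
  have h1 : (adjugate A).trace = ∑ i, ∏ j ∈ Finset.univ.erase i, lam j := by
    rw [hsp, adjugate_mul_distrib, adjugate_mul_distrib, Matrix.trace_mul_comm,
      Matrix.mul_assoc, ← adjugate_mul_distrib, hUU, adjugate_one, Matrix.mul_one,
      adjugate_diagonal, Matrix.trace_diagonal]
  have h2 : A.trace = ∑ i, lam i := by
    rw [hsp, Matrix.trace_mul_cycle, hUU, Matrix.one_mul, Matrix.trace_diagonal]
  have h3 : (B.adjugateᵀ * B.adjugate).trace = (adjugate A).trace := by
    rw [Matrix.adjugate_transpose, ← Matrix.adjugate_mul_distrib, ← hAdef]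
  have hEnn : 0 ≤ (adjugate A).trace := by
    rw [h1]; exact Finset.sum_nonneg fun i _ => Finset.prod_nonneg fun j _ => hlam j
  have hT : 0 ≤ A.trace := by rw [h2]; exact Finset.sum_nonneg fun i _ => hlam i
  have key : (n : ℝ) ^ (n - 2) * (adjugate A).trace ≤ A.trace ^ (n - 1) := by
    have h := esymm_le Finset.univ lam (fun i _ => hlam i)
    rw [Finset.card_univ, Fintype.card_fin] at h
    rw [h1, h2]; exact h
  have h4 : (Bᵀ * B).trace = A.trace := by rw [hAdef]; exact Matrix.trace_mul_comm Bᵀ B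
  rw [h3, h4]
  have hRHSnn : 0 ≤ (n : ℝ) ^ (-(((n : ℝ) - 2) / 2)) * Real.sqrt A.trace ^ (n - 1) := by
    positivity
  rw [← Real.sqrt_sq hRHSnn]
  apply Real.sqrt_le_sqrt
  have hsq : ((n : ℝ) ^ (-(((n : ℝ) - 2) / 2)) * Real.sqrt A.trace ^ (n - 1)) ^ 2
      = ((n : ℝ) ^ (n - 2))⁻¹ * A.trace ^ (n - 1) := by
    rw [mul_pow]
    congr 1
    · rw [← Real.rpow_natCast ((n : ℝ) ^ (-(((n : ℝ) - 2) / 2))) 2, ← Real.rpow_mul hn0.le]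
      have he : (-(((n : ℝ) - 2) / 2)) * ((2 : ℕ) : ℝ) = -(((n - 2 : ℕ) : ℝ)) := by
        push_cast [Nat.cast_sub hn]; ring
      rw [he, Real.rpow_neg hn0.le, Real.rpow_natCast]
    · rw [← pow_mul, mul_comm (n - 1) 2, pow_mul, Real.sq_sqrt hT]
  rw [hsq, inv_mul_eq_div, le_div_iff₀ (by positivity)]
  linarith [key]
end
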